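/- Let m ≥ 1, let C be a symmetric m×m matrix with integer entries, let a₁,…,a_m ∈ ℕ and l₁,…,l_m ∈ ℝ, and let A > 0 be real. For real q ∈ (0,1) let c₁(q) := ∑_{i=1}^{m} (−1)^{C_{ii}} q^{C_{ii}/2 + l_i} A^{a_i}/(1−q) and c₂(q) := ∑_{i=1}^{m} q^{2C_{ii}+2l_i} A^{2a_i}/((1−q)(1−q²)) + ∑_{1≤i<j≤m} (−1)^{C_{ii}+C_{jj}} q^{(C_{ii}+C_{jj})/2 + C_{ij} + l_i + l_j} A^{a_i+a_j}/(1−q)² (the coefficients of x¹ and x² in the quiver generating series). Then lim_{q→1⁻} [ (q²−1)·c₂(q) − (q−1)·c₁(q)² ] = ∑_{i=1}^{m} C_{ii} A^{2a_i} + ∑_{1≤i<j≤m} (−1)^{C_{ii}+C_{jj}} (1+2C_{ij}) A^{a_i+a_j}. Consequently the second coefficient y₂ of the classical series y(x) = lim_{q→1}P_Q(qx)/P_Q(x) = 1 + y₁x + y₂x² + … equals ∑_i C_{ii} A^{2a_i} + ∑_{i<j} (−1)^{C_{ii}+C_{jj}}(1+2C_{ij}) A^{a_i+a_j}. -/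

import Mathlib

open Filter Topology

lemma aux_slope (f : ℝ → ℝ) (d : ℝ) (hf : HasDerivAt f d 1) (h0 : f 1 = 0) :
    Tendsto (fun q => f q / (1 - q)) (𝓝[Set.Ioo (0:ℝ) 1] 1) (𝓝 (-d)) := by
  have h1 : Tendsto (slope f 1) (𝓝[≠] 1) (𝓝 d) := hasDerivAt_iff_tendsto_slope.mp hf
  have h2 : Tendsto (slope f 1) (𝓝[Set.Ioo (0:ℝ) 1] 1) (𝓝 d) :=
    h1.mono_left (nhdsWithin_mono _ (fun x hx => ne_of_lt hx.2))
  refine Tendsto.congr' ?_ h2.neg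
  filter_upwards [self_mem_nhdsWithin] with q hq
  rw [slope_def_field, h0, sub_zero, ← div_neg, neg_sub]

lemma aux_hdiff (α β : ℝ) :
    Tendsto (fun q : ℝ => (q ^ α - q ^ β) / (1 - q)) (𝓝[Set.Ioo (0:ℝ) 1] 1) (𝓝 (β - α)) := by
  have ha : HasDerivAt (fun q : ℝ => q ^ α) (α * (1:ℝ) ^ (α - 1)) 1 :=
    Real.hasDerivAt_rpow_const (Or.inl one_ne_zero)
  have hb : HasDerivAt (fun q : ℝ => q ^ β) (β * (1:ℝ) ^ (β - 1)) 1 :=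
    Real.hasDerivAt_rpow_const (Or.inl one_ne_zero)
  have h := aux_slope _ _ (ha.sub hb) (by simp)
  simpa using h

lemma aux_hcross (E c : ℝ) :
    Tendsto (fun q : ℝ => (2 * q ^ E - (1 + q) * q ^ (E + c)) / (1 - q))
      (𝓝[Set.Ioo (0:ℝ) 1] 1) (𝓝 (1 + 2 * c)) := by
  have ha : HasDerivAt (fun q : ℝ => 2 * q ^ E) (2 * (E * (1:ℝ) ^ (E - 1))) 1 :=
    (Real.hasDerivAt_rpow_const (Or.inl one_ne_zero)).const_mul 2
  have hb : HasDerivAt (fun q : ℝ => (1 + q) * q ^ (E + c))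
      (1 * (1:ℝ) ^ (E + c) + (1 + 1) * ((E + c) * (1:ℝ) ^ (E + c - 1))) 1 :=
    by
      have h1 : HasDerivAt (fun q : ℝ => 1 + q) (0 + 1) 1 :=
        (hasDerivAt_const (1:ℝ) (1:ℝ)).add (hasDerivAt_id 1)
      have := h1.mul (Real.hasDerivAt_rpow_const (p := E + c) (Or.inl one_ne_zero))
      rw [zero_add] at this
      exact this
  have h := aux_slope _ _ (ha.sub hb) (by norm_num)
  have : -(2 * (E * (1:ℝ) ^ (E - 1)) - (1 * (1:ℝ) ^ (E + c) + (1 + 1) * ((E + c) * (1:ℝ) ^ (E + c - 1)))) = 1 + 2 * c := by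
    simp; ring
  rw [this] at h
  exact h

lemma sum_split {m : ℕ} (F : Fin m → Fin m → ℝ) :
    ∑ i, ∑ j, F i j
      = ∑ i, F i i + ∑ i, ∑ j, (if i < j then F i j + F j i else 0) := by
  have h1 : ∀ i j : Fin m, F i j =
      (if i = j then F i i else 0) +
        ((if i < j then F i j else 0) + (if j < i then F i j else 0)) := by
    intro i j
    rcases lt_trichotomy i j with h | h | h
    · simp [h, h.ne, not_lt.mpr h.le]
    · simp [h]
    · simp [h, h.ne', not_lt.mpr h.le]
  calc ∑ i, ∑ j, F i j
      = ∑ i, ∑ j, ((if i = j then F i i else 0) +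
          ((if i < j then F i j else 0) + (if j < i then F i j else 0))) :=
        Finset.sum_congr rfl fun i _ => Finset.sum_congr rfl fun j _ => h1 i j
    _ = ∑ i, (∑ j, (if i = j then F i i else 0) +
          (∑ j, (if i < j then F i j else 0) + ∑ j, (if j < i then F i j else 0))) := by
        simp [Finset.sum_add_distrib]
    _ = ∑ i, F i i + (∑ i, ∑ j, (if i < j then F i j else 0)
          + ∑ i, ∑ j, (if j < i then F i j else 0)) := by
        rw [Finset.sum_add_distrib, Finset.sum_add_distrib]
        simp
    _ = ∑ i, F i i + (∑ i, ∑ j, (if i < j then F i j else 0)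
          + ∑ i, ∑ j, (if i < j then F j i else 0)) := by
        rw [Finset.sum_comm (f := fun i j => if (j:Fin m) < i then F i j else 0)]
    _ = ∑ i, F i i + ∑ i, ∑ j, (if i < j then F i j + F j i else 0) := by
        rw [← Finset.sum_add_distrib]
        congr 1
        refine Finset.sum_congr rfl fun i _ => ?_
        rw [← Finset.sum_add_distrib]
        refine Finset.sum_congr rfl fun j _ => ?_
        split <;> simp

/-- Second classical coefficient from a quiver: with
`c₁(q) = ∑_i (−1)^{C_{ii}} q^{C_{ii}/2 + l_i} A^{a_i}/(1−q)` and
`c₂(q) = ∑_i q^{2C_{ii}+2l_i} A^{2a_i}/((1−q)(1−q²))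
       + ∑_{i<j} (−1)^{C_{ii}+C_{jj}} q^{(C_{ii}+C_{jj})/2 + C_{ij} + l_i + l_j} A^{a_i+a_j}/(1−q)²`,
one has `lim_{q→1⁻} [(q²−1)c₂(q) − (q−1)c₁(q)²]
  = ∑_i C_{ii} A^{2a_i} + ∑_{i<j} (−1)^{C_{ii}+C_{jj}}(1+2C_{ij}) A^{a_i+a_j}`. -/
theorem quiver_second_classical_coefficient
    (m : ℕ) (hm : 1 ≤ m) (C : Fin m → Fin m → ℤ)
    (hC : ∀ i j, C i j = C j i) (a : Fin m → ℕ) (l : Fin m → ℝ)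
    (A : ℝ) (hA : 0 < A) :
    Filter.Tendsto
      (fun q : ℝ =>
        (q ^ 2 - 1) *
            (∑ i : Fin m,
                q ^ (2 * (C i i : ℝ) + 2 * l i) * A ^ (2 * a i) /
                  ((1 - q) * (1 - q ^ 2)) +
              ∑ i : Fin m, ∑ j : Fin m,
                if i < j then
                  (-1 : ℝ) ^ (C i i + C j j) *
                    q ^ (((C i i : ℝ) + (C j j : ℝ)) / 2 + (C i j : ℝ) + l i + l j) *
                    A ^ (a i + a j) / (1 - q) ^ 2
                else 0) -
          (q - 1) *
            (∑ i : Fin m,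
                (-1 : ℝ) ^ (C i i) * q ^ ((C i i : ℝ) / 2 + l i) * A ^ (a i) / (1 - q)) ^ 2)
      (nhdsWithin 1 (Set.Ioo (0 : ℝ) 1))
      (nhds (∑ i : Fin m, (C i i : ℝ) * A ^ (2 * a i) +
        ∑ i : Fin m, ∑ j : Fin m,
          if i < j then
            (-1 : ℝ) ^ (C i i + C j j) * (1 + 2 * (C i j : ℝ)) * A ^ (a i + a j)
          else 0)) := by
  set F : ℝ → ℝ := fun q =>
    (∑ i : Fin m, A ^ (2 * a i) *
        ((q ^ ((C i i : ℝ) + 2 * l i) - q ^ (2 * (C i i : ℝ) + 2 * l i)) / (1 - q)))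
    + ∑ i : Fin m, ∑ j : Fin m,
        (if i < j then ((-1 : ℝ) ^ (C i i + C j j) * A ^ (a i + a j)) *
          ((2 * q ^ (((C i i : ℝ) + (C j j : ℝ)) / 2 + l i + l j)
            - (1 + q) * q ^ ((((C i i : ℝ) + (C j j : ℝ)) / 2 + l i + l j) + (C i j : ℝ)))
            / (1 - q)) else 0) with hFdef
  have hF : Tendsto F (𝓝[Set.Ioo (0:ℝ) 1] 1)
      (𝓝 (∑ i : Fin m, (C i i : ℝ) * A ^ (2 * a i) +
        ∑ i : Fin m, ∑ j : Fin m,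
          if i < j then
            (-1 : ℝ) ^ (C i i + C j j) * (1 + 2 * (C i j : ℝ)) * A ^ (a i + a j)
          else 0)) := by
    apply Tendsto.add
    · apply tendsto_finset_sum
      intro i _
      have h := (aux_hdiff ((C i i : ℝ) + 2 * l i) (2 * (C i i : ℝ) + 2 * l i)).const_mul
        (A ^ (2 * a i))
      have e : (C i i : ℝ) * A ^ (2 * a i)
          = A ^ (2 * a i) * ((2 * (C i i : ℝ) + 2 * l i) - ((C i i : ℝ) + 2 * l i)) := by ring
      rw [e]; exact h
    · apply tendsto_finset_sum
      intro i _
      apply tendsto_finset_sum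
      intro j _
      by_cases hij : i < j
      · simp only [hij, if_true]
        have h := (aux_hcross (((C i i : ℝ) + (C j j : ℝ)) / 2 + l i + l j)
          ((C i j : ℝ))).const_mul ((-1 : ℝ) ^ (C i i + C j j) * A ^ (a i + a j))
        have e : (-1 : ℝ) ^ (C i i + C j j) * (1 + 2 * (C i j : ℝ)) * A ^ (a i + a j)
            = ((-1 : ℝ) ^ (C i i + C j j) * A ^ (a i + a j)) * (1 + 2 * (C i j : ℝ)) := by ring
        rw [e]; exact h
      · simp [hij]
  have key : ∀ q ∈ Set.Ioo (0:ℝ) 1,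
      (q ^ 2 - 1) *
            (∑ i : Fin m,
                q ^ (2 * (C i i : ℝ) + 2 * l i) * A ^ (2 * a i) /
                  ((1 - q) * (1 - q ^ 2)) +
              ∑ i : Fin m, ∑ j : Fin m,
                if i < j then
                  (-1 : ℝ) ^ (C i i + C j j) *
                    q ^ (((C i i : ℝ) + (C j j : ℝ)) / 2 + (C i j : ℝ) + l i + l j) *
                    A ^ (a i + a j) / (1 - q) ^ 2
                else 0) -
          (q - 1) *
            (∑ i : Fin m,
                (-1 : ℝ) ^ (C i i) * q ^ ((C i i : ℝ) / 2 + l i) * A ^ (a i) / (1 - q)) ^ 2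
        = F q := by
    intro q hq
    obtain ⟨hq0, hq1⟩ := hq
    have h1 : (1:ℝ) - q ≠ 0 := ne_of_gt (by linarith)
    have h2 : (1:ℝ) + q ≠ 0 := ne_of_gt (by linarith)
    set u : Fin m → ℝ := fun i => (-1 : ℝ) ^ (C i i) * q ^ ((C i i : ℝ) / 2 + l i) * A ^ (a i)
      with hu_def
    have hsum : (∑ i : Fin m,
        (-1 : ℝ) ^ (C i i) * q ^ ((C i i : ℝ) / 2 + l i) * A ^ (a i) / (1 - q))
        = (∑ i : Fin m, u i) / (1 - q) := by
      rw [Finset.sum_div]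
    have hU2 : (∑ i : Fin m, u i) ^ 2
        = ∑ i : Fin m, u i * u i
          + ∑ i : Fin m, ∑ j : Fin m, (if i < j then u i * u j + u j * u i else 0) := by
      rw [sq, Finset.sum_mul_sum, sum_split]
    have hu2 : ∀ i : Fin m, u i * u i = q ^ ((C i i : ℝ) + 2 * l i) * A ^ (2 * a i) := by
      intro i
      have hs : (-1 : ℝ) ^ (C i i) * (-1 : ℝ) ^ (C i i) = 1 := by
        rw [← zpow_add₀ (by norm_num : (-1:ℝ) ≠ 0)]
        exact Even.neg_one_zpow ⟨C i i, rfl⟩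
      have hqq : q ^ ((C i i : ℝ) / 2 + l i) * q ^ ((C i i : ℝ) / 2 + l i)
          = q ^ ((C i i : ℝ) + 2 * l i) := by
        rw [← Real.rpow_add hq0]; ring_nf
      have hAA : A ^ (a i) * A ^ (a i) = A ^ (2 * a i) := by
        rw [← pow_add, two_mul]
      calc u i * u i
          = ((-1 : ℝ) ^ (C i i) * (-1 : ℝ) ^ (C i i))
            * (q ^ ((C i i : ℝ) / 2 + l i) * q ^ ((C i i : ℝ) / 2 + l i))
            * (A ^ (a i) * A ^ (a i)) := by rw [hu_def]; ring
        _ = q ^ ((C i i : ℝ) + 2 * l i) * A ^ (2 * a i) := by rw [hs, hqq, hAA]; ring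
    have huij : ∀ i j : Fin m, u i * u j
        = (-1 : ℝ) ^ (C i i + C j j)
          * q ^ (((C i i : ℝ) + (C j j : ℝ)) / 2 + l i + l j) * A ^ (a i + a j) := by
      intro i j
      have hs : (-1 : ℝ) ^ (C i i) * (-1 : ℝ) ^ (C j j) = (-1 : ℝ) ^ (C i i + C j j) := by
        rw [← zpow_add₀ (by norm_num : (-1:ℝ) ≠ 0)]
      have hqq : q ^ ((C i i : ℝ) / 2 + l i) * q ^ ((C j j : ℝ) / 2 + l j)
          = q ^ (((C i i : ℝ) + (C j j : ℝ)) / 2 + l i + l j) := by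
        rw [← Real.rpow_add hq0]; ring_nf
      have hAA : A ^ (a i) * A ^ (a j) = A ^ (a i + a j) := by rw [← pow_add]
      calc u i * u j
          = ((-1 : ℝ) ^ (C i i) * (-1 : ℝ) ^ (C j j))
            * (q ^ ((C i i : ℝ) / 2 + l i) * q ^ ((C j j : ℝ) / 2 + l j))
            * (A ^ (a i) * A ^ (a j)) := by rw [hu_def]; ring
        _ = _ := by rw [hs, hqq, hAA]
    rw [hsum, div_pow, hU2]
    have key1 : (q ^ 2 - 1) * (∑ i : Fin m,
          q ^ (2 * (C i i : ℝ) + 2 * l i) * A ^ (2 * a i) / ((1 - q) * (1 - q ^ 2)))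
        - (q - 1) * ((∑ i : Fin m, u i * u i) / (1 - q) ^ 2)
        = ∑ i : Fin m, A ^ (2 * a i) *
            ((q ^ ((C i i : ℝ) + 2 * l i) - q ^ (2 * (C i i : ℝ) + 2 * l i)) / (1 - q)) := by
      rw [Finset.mul_sum, Finset.sum_div, Finset.mul_sum, ← Finset.sum_sub_distrib]
      refine Finset.sum_congr rfl fun i _ => ?_
      rw [hu2 i, show (1:ℝ) - q ^ 2 = (1 - q) * (1 + q) from by ring]
      field_simp
      ring
    have key2 : (q ^ 2 - 1) * (∑ i : Fin m, ∑ j : Fin m,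
          if i < j then
            (-1 : ℝ) ^ (C i i + C j j) *
              q ^ (((C i i : ℝ) + (C j j : ℝ)) / 2 + (C i j : ℝ) + l i + l j) *
              A ^ (a i + a j) / (1 - q) ^ 2
          else 0)
        - (q - 1) * ((∑ i : Fin m, ∑ j : Fin m,
            (if i < j then u i * u j + u j * u i else 0)) / (1 - q) ^ 2)
        = ∑ i : Fin m, ∑ j : Fin m,
            (if i < j then ((-1 : ℝ) ^ (C i i + C j j) * A ^ (a i + a j)) *
              ((2 * q ^ (((C i i : ℝ) + (C j j : ℝ)) / 2 + l i + l j)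
                - (1 + q) * q ^ ((((C i i : ℝ) + (C j j : ℝ)) / 2 + l i + l j) + (C i j : ℝ)))
                / (1 - q)) else 0) := by
      rw [Finset.mul_sum, Finset.sum_div, Finset.mul_sum, ← Finset.sum_sub_distrib]
      refine Finset.sum_congr rfl fun i _ => ?_
      rw [Finset.mul_sum, Finset.sum_div, Finset.mul_sum, ← Finset.sum_sub_distrib]
      refine Finset.sum_congr rfl fun j _ => ?_
      by_cases hij : i < j
      · simp only [hij, if_true]
        have hE : q ^ (((C i i : ℝ) + (C j j : ℝ)) / 2 + (C i j : ℝ) + l i + l j)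
            = q ^ ((((C i i : ℝ) + (C j j : ℝ)) / 2 + l i + l j) + (C i j : ℝ)) := by
          congr 1; ring
        have huji : u j * u i
            = (-1 : ℝ) ^ (C i i + C j j)
              * q ^ (((C i i : ℝ) + (C j j : ℝ)) / 2 + l i + l j) * A ^ (a i + a j) := by
          rw [mul_comm]; exact huij i j
        rw [hE, huij i j, huji]
        field_simp
        ring
      · simp [hij]
    rw [hFdef]
    simp only
    linear_combination key1 + key2
  have heq : (fun q : ℝ =>
        (q ^ 2 - 1) *
            (∑ i : Fin m,
                q ^ (2 * (C i i : ℝ) + 2 * l i) * A ^ (2 * a i) /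
                  ((1 - q) * (1 - q ^ 2)) +
              ∑ i : Fin m, ∑ j : Fin m,
                if i < j then
                  (-1 : ℝ) ^ (C i i + C j j) *
                    q ^ (((C i i : ℝ) + (C j j : ℝ)) / 2 + (C i j : ℝ) + l i + l j) *
                    A ^ (a i + a j) / (1 - q) ^ 2
                else 0) -
          (q - 1) *
            (∑ i : Fin m,
                (-1 : ℝ) ^ (C i i) * q ^ ((C i i : ℝ) / 2 + l i) * A ^ (a i) / (1 - q)) ^ 2)
      =ᶠ[𝓝[Set.Ioo (0:ℝ) 1] 1] F := by
    filter_upwards [self_mem_nhdsWithin] with q hq using key q hq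
  exact hF.congr' heq.symm
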